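/- arXiv:1512.02710 — 9 statements merged into one kernel-verified Lean document; each statement's English description precedes it below -/
import Mathlib

section
/- For all integers t ≥ 2, k ≥ 2, we have ((t-1)(k-1))^(1/t) + (t(1-1/k))^(1/(1-t)) ≥ 2. -/
lemma succ_pow_ge (a s : ℕ) : a^(s+1) + (s+1)*a^s ≤ (a+1)^(s+1) := by
  induction s with
  | zero => simpa using Nat.le_refl (a+1)
  | succ s ih =>
    have h1 : a^(s+2) + (s+2)*a^(s+1) ≤ (a+1) * (a^(s+1) + (s+1)*a^s) := by
      have : (a+1) * (a^(s+1) + (s+1)*a^s)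
          = a^(s+2) + (s+2)*a^(s+1) + (s+1)*a^s := by ring
      omega
    calc a^(s+2) + (s+2)*a^(s+1) ≤ (a+1) * (a^(s+1) + (s+1)*a^s) := h1
      _ ≤ (a+1) * (a+1)^(s+1) := Nat.mul_le_mul_left _ ih
      _ = (a+1)^(s+2) := by ring

lemma pow_base (n : ℕ) (hn : 2 ≤ n) : (n+1)^(n+1) ≤ n^n * 2^(n+1) := by
  induction n, hn using Nat.le_induction with
  | base => norm_num
  | succ n hn ih =>
    have hnpos : 0 < n^n := Nat.pow_pos (by omega)
    have h1 : n^n * (n+2)^(n+2) ≤ 2 * (n+1)^(2*n+2) := by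
      have ha : (n*(n+2))^n ≤ ((n+1)^2)^n := Nat.pow_le_pow_left (by nlinarith) n
      have hb : (n+2)^2 ≤ 2*(n+1)^2 := by nlinarith
      calc n^n * (n+2)^(n+2) = (n*(n+2))^n * (n+2)^2 := by rw [mul_pow]; ring
        _ ≤ ((n+1)^2)^n * (2*(n+1)^2) := Nat.mul_le_mul ha hb
        _ = 2 * (n+1)^(2*n+2) := by rw [← pow_mul]; ring
    have h3 : n^n * (n+1+1)^(n+1+1) ≤ n^n * ((n+1)^(n+1) * 2^(n+1+1)) := by
      calc n^n * (n+1+1)^(n+1+1) = n^n * (n+2)^(n+2) := by norm_num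
        _ ≤ 2 * (n+1)^(2*n+2) := h1
        _ = 2 * (n+1)^(n+1) * (n+1)^(n+1) := by ring
        _ ≤ 2 * (n+1)^(n+1) * (n^n * 2^(n+1)) := Nat.mul_le_mul_left _ ih
        _ = n^n * ((n+1)^(n+1) * 2^(n+1+1)) := by ring
    exact Nat.le_of_mul_le_mul_left h3 hnpos

lemma nat_key (n m : ℕ) (hn : 1 ≤ n) :
    (n+1)^(n+1) * (m+1) ≤ n^n * (m+2)^(n+1) := by
  induction m with
  | zero =>
    rcases Nat.lt_or_ge n 2 with h | h
    · interval_cases n <;> norm_num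
    · simpa using pow_base n h
  | succ m ih =>
    have key : (n+1)^(n+1) ≤ n^n * ((n+1)*(m+2)^n) := by
      have h1 : (n+1)^n ≤ (n*(m+2))^n :=
        Nat.pow_le_pow_left (by nlinarith [Nat.zero_le (n*m)]) n
      calc (n+1)^(n+1) = (n+1) * (n+1)^n := by ring
        _ ≤ (n+1) * (n*(m+2))^n := Nat.mul_le_mul_left _ h1
        _ = n^n * ((n+1)*(m+2)^n) := by rw [mul_pow]; ring
    have h2 := succ_pow_ge (m+2) n
    calc (n+1)^(n+1)*(m+1+1) = (n+1)^(n+1)*(m+1) + (n+1)^(n+1) := by ring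
      _ ≤ n^n*(m+2)^(n+1) + n^n*((n+1)*(m+2)^n) := Nat.add_le_add ih key
      _ = n^n * ((m+2)^(n+1) + (n+1)*(m+2)^n) := by ring
      _ ≤ n^n * (m+2+1)^(n+1) := Nat.mul_le_mul_left _ h2
      _ = n^n * (m+1+2)^(n+1) := by ring_nf

theorem stmt0 (t k : ℤ) (ht : 2 ≤ t) (hk : 2 ≤ k) :
    (((t : ℝ) - 1) * ((k : ℝ) - 1)) ^ ((1 : ℝ) / (t : ℝ)) +
      ((t : ℝ) * (1 - 1 / (k : ℝ))) ^ ((1 : ℝ) / (1 - (t : ℝ))) ≥ 2 := by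
  obtain ⟨n, hn⟩ : ∃ n : ℕ, t = (n : ℤ) + 2 := ⟨(t-2).toNat, by omega⟩
  obtain ⟨m, hm⟩ : ∃ m : ℕ, k = (m : ℤ) + 2 := ⟨(k-2).toNat, by omega⟩
  subst hn hm
  push_cast
  set x : ℝ := (n : ℝ) + 2 with hxdef
  set y : ℝ := (m : ℝ) + 2 with hydef
  set a : ℝ := (x - 1) * (y - 1) with hadef
  set b : ℝ := x * (1 - 1 / y) with hbdef
  have hx0 : (0:ℝ) < x := by rw [hxdef]; positivity
  have hy0 : (0:ℝ) < y := by rw [hydef]; positivity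
  have hx1pos : (0:ℝ) < x - 1 := by
    have : (0:ℝ) ≤ (n:ℝ) := Nat.cast_nonneg n
    rw [hxdef]; linarith
  have hyne : y ≠ 0 := ne_of_gt hy0
  have ha0 : (0:ℝ) ≤ a := by
    have : (0:ℝ) ≤ y - 1 := by nlinarith
    rw [hadef]; nlinarith
  have hb1 : (1:ℝ) ≤ b := by
    have hy2 : (2:ℝ) ≤ y := by
      have : (0:ℝ) ≤ (m:ℝ) := Nat.cast_nonneg m
      rw [hydef]; linarith
    have h12 : 1/y ≤ 1/2 := by
      rw [div_le_div_iff₀ hy0 (by norm_num)]; linarith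
    have hx2 : (2:ℝ) ≤ x := by
      have : (0:ℝ) ≤ (n:ℝ) := Nat.cast_nonneg n
      rw [hxdef]; linarith
    have h0 : (0:ℝ) ≤ 1 - 1/y := by linarith
    rw [hbdef]; nlinarith
  have hb0 : (0:ℝ) ≤ b := le_trans zero_le_one hb1
  -- the key polynomial inequality
  have hpow : b ^ (n+2) ≤ a ^ (n+1) := by
    have hkey : ((n:ℝ)+2)^(n+2)*((m:ℝ)+1) ≤ ((n:ℝ)+1)^(n+1)*((m:ℝ)+2)^(n+2) := by
      exact_mod_cast nat_key (n+1) m (Nat.le_add_left 1 n)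
    have hm1 : (0:ℝ) ≤ ((m:ℝ)+1)^(n+1) := by positivity
    have hkey2 := mul_le_mul_of_nonneg_right hkey hm1
    have hbe : b = x*(y-1)/y := by rw [hbdef]; field_simp
    rw [hbe, div_pow, div_le_iff₀ (by positivity : (0:ℝ) < y^(n+2)), hadef]
    calc (x*(y-1))^(n+2)
        = (((n:ℝ)+2)^(n+2)*((m:ℝ)+1))*((m:ℝ)+1)^(n+1) := by
          rw [mul_pow, hxdef, hydef]; ring
      _ ≤ (((n:ℝ)+1)^(n+1)*((m:ℝ)+2)^(n+2))*((m:ℝ)+1)^(n+1) := hkey2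
      _ = ((x-1)*(y-1))^(n+1) * y^(n+2) := by rw [mul_pow, hxdef, hydef]; ring
  -- exponent arithmetic
  have hxx : (0:ℝ) < x * (x - 1) := mul_pos hx0 hx1pos
  have he0 : (0:ℝ) ≤ 1/(x*(x-1)) := le_of_lt (one_div_pos.mpr hxx)
  have hc1 : ((n+1 : ℕ) : ℝ) = x - 1 := by rw [hxdef]; push_cast; ring
  have hc2 : ((n+2 : ℕ) : ℝ) = x := by rw [hxdef]; push_cast; ring
  have hA : a ^ ((1:ℝ)/x) = (a ^ (n+1)) ^ ((1:ℝ)/(x*(x-1))) := by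
    rw [← Real.rpow_natCast a (n+1), ← Real.rpow_mul ha0, hc1]
    congr 1
    field_simp
  have hB : b ^ ((1:ℝ)/(x-1)) = (b ^ (n+2)) ^ ((1:ℝ)/(x*(x-1))) := by
    rw [← Real.rpow_natCast b (n+2), ← Real.rpow_mul hb0, hc2]
    congr 1
    field_simp
  have hCA : b ^ ((1:ℝ)/(x-1)) ≤ a ^ ((1:ℝ)/x) := by
    rw [hA, hB]
    exact Real.rpow_le_rpow (by positivity) hpow he0
  have hC1 : (1:ℝ) ≤ b ^ ((1:ℝ)/(x-1)) := by
    calc (1:ℝ) = (1:ℝ) ^ ((1:ℝ)/(x-1)) := (Real.one_rpow _).symm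
      _ ≤ b ^ ((1:ℝ)/(x-1)) :=
        Real.rpow_le_rpow zero_le_one hb1 (le_of_lt (one_div_pos.mpr hx1pos))
  have hCpos : (0:ℝ) < b ^ ((1:ℝ)/(x-1)) := lt_of_lt_of_le one_pos hC1
  have hBneg : b ^ ((1:ℝ)/(1-x)) = (b ^ ((1:ℝ)/(x-1)))⁻¹ := by
    rw [show (1:ℝ) - x = -(x-1) by ring, div_neg, Real.rpow_neg hb0]
  rw [hBneg]
  set C : ℝ := b ^ ((1:ℝ)/(x-1))
  have h5 : 2 - C ≤ C⁻¹ := by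
    rw [inv_eq_one_div, le_div_iff₀ hCpos]
    nlinarith [sq_nonneg (C-1)]
  linarith [hCA, h5]
end

section
/- For all real numbers s ≥ 1 and m ≥ 1, (s·m)^(1/(s+1)) · ((m+1)/(m(s+1)))^(1/s) ≥ 1. -/
theorem stmt1 (s m : ℝ) (hs : 1 ≤ s) (hm : 1 ≤ m) :
    (s * m) ^ (1 / (s + 1)) * ((m + 1) / (m * (s + 1))) ^ (1 / s) ≥ 1 := by
  have hs0 : (0:ℝ) < s := lt_of_lt_of_le one_pos hs
  have hm0 : (0:ℝ) < m := lt_of_lt_of_le one_pos hm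
  have hs1 : (0:ℝ) < s + 1 := by linarith
  have hm1 : (0:ℝ) < m + 1 := by linarith
  have hsne : s ≠ 0 := ne_of_gt hs0
  have hs1ne : s + 1 ≠ 0 := ne_of_gt hs1
  -- weighted AM-GM
  have key : m ^ (1/(s+1)) * (1/s) ^ (s/(s+1)) ≤ (m+1)/(s+1) := by
    have h := Real.geom_mean_le_arith_mean2_weighted
      (w₁ := 1/(s+1)) (w₂ := s/(s+1)) (p₁ := m) (p₂ := 1/s)
      (by positivity) (by positivity) (by positivity) (by positivity)
      (by field_simp; ring)
    calc m ^ (1/(s+1)) * (1/s) ^ (s/(s+1)) ≤ 1/(s+1) * m + s/(s+1) * (1/s) := h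
      _ = (m+1)/(s+1) := by field_simp
  have h3 : m * (1/s) ^ s ≤ ((m+1)/(s+1)) ^ (s+1) := by
    have h2 : (m ^ (1/(s+1)) * (1/s) ^ (s/(s+1))) ^ (s+1) ≤ ((m+1)/(s+1)) ^ (s+1) :=
      Real.rpow_le_rpow (by positivity) key hs1.le
    calc m * (1/s) ^ s
        = (m ^ (1/(s+1)) * (1/s) ^ (s/(s+1))) ^ (s+1) := by
          rw [Real.mul_rpow (by positivity) (by positivity),
              ← Real.rpow_mul hm0.le, ← Real.rpow_mul (by positivity),
              one_div_mul_cancel hs1ne, div_mul_cancel₀ _ hs1ne, Real.rpow_one]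
      _ ≤ _ := h2
  -- key multiplicative inequality
  have h4 : 1 ≤ (s*m) ^ s * ((m+1)/(m*(s+1))) ^ (s+1) := by
    have e1 : ((m+1)/(m*(s+1))) ^ (s+1) = ((m+1)/(s+1)) ^ (s+1) * (1/m) ^ (s+1) := by
      rw [← Real.mul_rpow (by positivity) (by positivity)]
      congr 1
      rw [mul_comm m (s+1), ← div_div, mul_one_div]
    have e2 : (s*m) ^ s = s ^ s * m ^ s := Real.mul_rpow hs0.le hm0.le
    rw [e1, e2]
    have h5 : s ^ s * m ^ s * (m * (1/s) ^ s * (1/m) ^ (s+1)) ≤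
        s ^ s * m ^ s * (((m+1)/(s+1)) ^ (s+1) * (1/m) ^ (s+1)) := by
      apply mul_le_mul_of_nonneg_left _ (by positivity)
      exact mul_le_mul_of_nonneg_right h3 (by positivity)
    refine le_trans (le_of_eq ?_) h5
    rw [Real.div_rpow (by norm_num) hs0.le, Real.div_rpow (by norm_num) hm0.le,
        Real.one_rpow, Real.one_rpow, Real.rpow_add hm0]
    field_simp
    ring
    simp
  -- conclude by taking the (s*(s+1))-th root
  have hGpos : 0 < (s * m) ^ (1 / (s + 1)) * ((m + 1) / (m * (s + 1))) ^ (1 / s) := by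
    positivity
  have h6 : ((s * m) ^ (1 / (s + 1)) * ((m + 1) / (m * (s + 1))) ^ (1 / s)) ^ (s*(s+1))
      = (s*m) ^ s * ((m+1)/(m*(s+1))) ^ (s+1) := by
    rw [Real.mul_rpow (by positivity) (by positivity),
        ← Real.rpow_mul (by positivity), ← Real.rpow_mul (by positivity)]
    congr 1 <;> congr 1 <;> field_simp
  have h7 : 1 ≤ ((s * m) ^ (1 / (s + 1)) * ((m + 1) / (m * (s + 1))) ^ (1 / s)) ^ (s*(s+1)) := by
    rw [h6]; exact h4
  by_contra hc
  push_neg at hc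
  have := Real.rpow_lt_one (z := s*(s+1)) hGpos.le hc (by positivity)
  linarith
end

section
/- For all real numbers s ≥ 1 and m ≥ 1, (s·m)^s · ((m+1)/(m(s+1)))^(s+1) ≥ 1, equivalently (s^s / m) · ((m+1)/(s+1))^(s+1) ≥ 1. -/
theorem stmt2 (s m : ℝ) (hs : 1 ≤ s) (hm : 1 ≤ m) :
    (s * m) ^ s * ((m + 1) / (m * (s + 1))) ^ (s + 1) ≥ 1 ∧
      (s ^ s / m) * ((m + 1) / (s + 1)) ^ (s + 1) ≥ 1 := by
  have hs0 : (0:ℝ) < s := lt_of_lt_of_le one_pos hs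
  have hm0 : (0:ℝ) < m := lt_of_lt_of_le one_pos hm
  have hs1 : (0:ℝ) < s + 1 := by linarith
  -- weighted AM-GM with weights s/(s+1), 1/(s+1) applied to m/s and 1
  have hamgm : (m / s) ^ (s / (s + 1)) * 1 ^ ((1:ℝ) / (s + 1)) ≤
      s / (s + 1) * (m / s) + 1 / (s + 1) * 1 := by
    apply Real.geom_mean_le_arith_mean2_weighted
    · positivity
    · positivity
    · positivity
    · norm_num
    · field_simp
  have h1 : (m / s) ^ (s / (s + 1)) ≤ (m + 1) / (s + 1) := by
    have hsum : s / (s + 1) * (m / s) + 1 / (s + 1) * 1 = (m + 1) / (s + 1) := by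
      field_simp
    rw [hsum] at hamgm
    simpa using hamgm
  have h2 : (m / s) ^ s ≤ ((m + 1) / (s + 1)) ^ (s + 1) := by
    have h := Real.rpow_le_rpow (by positivity) h1 hs1.le
    rwa [← Real.rpow_mul (by positivity : (0:ℝ) ≤ m / s),
      div_mul_cancel₀ s (ne_of_gt hs1)] at h
  have h3 : m / s ^ s ≤ ((m + 1) / (s + 1)) ^ (s + 1) := by
    refine le_trans ?_ h2
    rw [Real.div_rpow hm0.le hs0.le]
    apply div_le_div_of_nonneg_right ?_ (by positivity)
    · calc m = m ^ (1:ℝ) := (Real.rpow_one m).symm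
        _ ≤ m ^ s := Real.rpow_le_rpow_of_exponent_le hm hs
  have key : (s ^ s / m) * ((m + 1) / (s + 1)) ^ (s + 1) ≥ 1 := by
    have hss : (0:ℝ) < s ^ s := Real.rpow_pos_of_pos hs0 s
    have h4 : (s ^ s / m) * (m / s ^ s) ≤ (s ^ s / m) * ((m + 1) / (s + 1)) ^ (s + 1) :=
      mul_le_mul_of_nonneg_left h3 (by positivity)
    have h5 : (s ^ s / m) * (m / s ^ s) = 1 := by field_simp
    linarith
  have heq : (s * m) ^ s * ((m + 1) / (m * (s + 1))) ^ (s + 1) =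
      (s ^ s / m) * ((m + 1) / (s + 1)) ^ (s + 1) := by
    rw [Real.mul_rpow hs0.le hm0.le,
      Real.div_rpow (by positivity) (by positivity),
      Real.div_rpow (by positivity) hs1.le,
      Real.mul_rpow hm0.le hs1.le,
      Real.rpow_add_one hm0.ne' s]
    have hms : m ^ s ≠ 0 := by positivity
    have hs1s : (s + 1) ^ (s + 1) ≠ 0 := by positivity
    field_simp
  exact ⟨heq ▸ key, key⟩
end

section
/- For all real numbers s ≥ 1 and m ≥ 1, (s·m)^(1/(s+1)) + ((m+1)/(m(s+1)))^(1/s) ≥ 2. -/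
theorem stmt3 (s m : ℝ) (hs : 1 ≤ s) (hm : 1 ≤ m) :
    (s * m) ^ (1 / (s + 1)) + ((m + 1) / (m * (s + 1))) ^ (1 / s) ≥ 2 := by
  have hs0 : (0:ℝ) < s := lt_of_lt_of_le one_pos hs
  have hm0 : (0:ℝ) < m := lt_of_lt_of_le one_pos hm
  have hsp : (0:ℝ) < s + 1 := by linarith
  have hx : (0:ℝ) < s * m := mul_pos hs0 hm0
  have hy : (0:ℝ) < (m + 1) / (m * (s + 1)) := by positivity
  -- Part A : s log s - (s+1) log (s+1) + (s+1) log 2 ≥ 0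
  have L1 : Real.log ((s+1)/(2*s)) ≤ (s+1)/(2*s) - 1 :=
    Real.log_le_sub_one_of_pos (by positivity)
  have L2 : Real.log ((s+1)/2) ≤ (s+1)/2 - 1 :=
    Real.log_le_sub_one_of_pos (by positivity)
  have e1 : Real.log ((s+1)/(2*s)) = Real.log (s+1) - (Real.log 2 + Real.log s) := by
    rw [Real.log_div (by positivity) (by positivity), Real.log_mul (by norm_num) hs0.ne']
  have e2 : Real.log ((s+1)/2) = Real.log (s+1) - Real.log 2 := by
    rw [Real.log_div (by positivity) (by norm_num)]
  have hA : 0 ≤ s * Real.log s - (s+1) * Real.log (s+1) + (s+1) * Real.log 2 := by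
    have hL1s : s * Real.log ((s+1)/(2*s)) ≤ s * ((s+1)/(2*s) - 1) :=
      mul_le_mul_of_nonneg_left L1 hs0.le
    rw [e1] at hL1s
    have hv : s * ((s+1)/(2*s) - 1) = (s+1)/2 - s := by field_simp
    rw [hv] at hL1s
    rw [e2] at L2
    nlinarith [hL1s, L2]
  -- Part B : (s+1)(log(m+1) - log 2) ≥ log m
  have hmsq : m ≤ ((m+1)/2)^2 := by nlinarith [sq_nonneg (m - 1)]
  have hlm : Real.log m ≤ 2 * Real.log ((m+1)/2) := by
    have h := Real.log_le_log hm0 hmsq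
    rwa [show ((m+1)/2)^2 = ((m+1)/2)^(2:ℕ) by norm_num, Real.log_pow] at h
    
  have hlognn : 0 ≤ Real.log ((m+1)/2) := Real.log_nonneg (by linarith)
  have e3 : Real.log ((m+1)/2) = Real.log (m+1) - Real.log 2 := by
    rw [Real.log_div (by positivity) (by norm_num)]
  have hB : 0 ≤ (s+1) * (Real.log (m+1) - Real.log 2) - Real.log m := by
    rw [← e3]
    nlinarith [hlm, hlognn]
  -- combine: P ≥ 0
  have hP : 0 ≤ s * Real.log (s*m) + (s+1) * Real.log ((m+1)/(m*(s+1))) := by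
    rw [Real.log_mul hs0.ne' hm0.ne',
        Real.log_div (by positivity) (by positivity),
        Real.log_mul hm0.ne' hsp.ne']
    nlinarith [hA, hB]
  have hkey : 0 ≤ Real.log (s*m) * (1/(s+1)) + Real.log ((m+1)/(m*(s+1))) * (1/s) := by
    have heq : Real.log (s*m) * (1/(s+1)) + Real.log ((m+1)/(m*(s+1))) * (1/s)
        = (s * Real.log (s*m) + (s+1) * Real.log ((m+1)/(m*(s+1)))) / (s*(s+1)) := by
      field_simp
    rw [heq]
    exact div_nonneg hP (by positivity)
  set u := Real.log (s*m) * (1/(s+1)) with hu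
  set v := Real.log ((m+1)/(m*(s+1))) * (1/s) with hv
  have ha : (s * m) ^ (1 / (s + 1)) = Real.exp u := by
    rw [Real.rpow_def_of_pos hx]
  have hb : ((m + 1) / (m * (s + 1))) ^ (1 / s) = Real.exp v := by
    rw [Real.rpow_def_of_pos hy]
  rw [ha, hb, ge_iff_le]
  have hprod : 1 ≤ Real.exp u * Real.exp v := by
    rw [← Real.exp_add]
    exact Real.one_le_exp (by linarith)
  nlinarith [Real.exp_pos u, Real.exp_pos v, sq_nonneg (Real.exp u - Real.exp v),
    sq_nonneg (Real.exp u + Real.exp v - 2), hprod]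
end

section
/- Let t ≥ 2 and k ≥ 2 be integers and define g(n) = (1 + ((t(1-1/k))^(1/(t-1)) - 1)·n) / ((t-1)(k-1))^(n/t) for natural numbers n. Then g is non-increasing: g(n+1) ≤ g(n) for all n ≥ 0. -/
theorem stmt4 (t k : ℤ) (ht : 2 ≤ t) (hk : 2 ≤ k) (g : ℕ → ℝ)
    (hg : ∀ n : ℕ, g n =
      (1 + (((t : ℝ) * (1 - 1 / (k : ℝ))) ^ ((1 : ℝ) / ((t : ℝ) - 1)) - 1) * (n : ℝ)) /
        (((t : ℝ) - 1) * ((k : ℝ) - 1)) ^ ((n : ℝ) / (t : ℝ))) :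
    ∀ n : ℕ, g (n + 1) ≤ g n := by
  intro n
  have hT : (2:ℝ) ≤ (t:ℝ) := by exact_mod_cast ht
  have hK : (2:ℝ) ≤ (k:ℝ) := by exact_mod_cast hk
  set T := (t:ℝ) with hTdef
  set K := (k:ℝ) with hKdef
  have hTpos : (0:ℝ) < T := by linarith
  have hT1pos : (0:ℝ) < T - 1 := by linarith
  have hKpos : (0:ℝ) < K := by linarith
  have hK1pos : (0:ℝ) < K - 1 := by linarith
  set a := (T * (1 - 1/K)) ^ ((1:ℝ)/(T-1)) with hadef
  set B := (T-1)*(K-1) with hBdef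
  have hBpos : 0 < B := by positivity
  have hbase : T * (1 - 1/K) = T*(K-1)/K := by field_simp
  have hbasepos : 0 < T * (1 - 1/K) := by rw [hbase]; positivity
  have hbase1 : 1 ≤ T * (1 - 1/K) := by
    rw [hbase, le_div_iff₀ hKpos]; nlinarith
  have ha1 : 1 ≤ a := by
    calc (1:ℝ) = 1 ^ ((1:ℝ)/(T-1)) := (Real.one_rpow _).symm
    _ ≤ a := Real.rpow_le_rpow zero_le_one hbase1 (by positivity)
  have hB1 : 1 ≤ B := by nlinarith
  -- key inequality: a ≤ B ^ (1/T)
  set b := B ^ ((1:ℝ)/T) with hbdef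
  have hbpos : 0 < b := by positivity
  have key : a ≤ b := by
    -- weighted AM-GM
    have amgm := Real.geom_mean_le_arith_mean2_weighted
      (w₁ := 1/T) (w₂ := (T-1)/T) (p₁ := T*(K-1)) (p₂ := T/(T-1))
      (by positivity) (by positivity) (by positivity) (by positivity)
      (by field_simp; ring)
    have hAM : (1/T) * (T*(K-1)) + ((T-1)/T) * (T/(T-1)) = K := by
      field_simp
      ring
    rw [hAM] at amgm
    have hGMpos : (0:ℝ) < (T*(K-1)) ^ ((1:ℝ)/T) * (T/(T-1)) ^ ((T-1)/T) := by
      positivity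
    have hlog := Real.log_le_log hGMpos amgm
    rw [Real.log_mul (by positivity) (by positivity), Real.log_rpow (by positivity),
      Real.log_rpow (by positivity), Real.log_mul (ne_of_gt hTpos) (ne_of_gt hK1pos),
      Real.log_div (ne_of_gt hTpos) (ne_of_gt hT1pos)] at hlog
    -- hlog : 1/T * (log T + log (K-1)) + (T-1)/T * (log T - log (T-1)) ≤ log K
    have hlog2 : Real.log T + Real.log (K-1) + (T-1) * (Real.log T - Real.log (T-1))
        ≤ T * Real.log K := by
      have := mul_le_mul_of_nonneg_left hlog (le_of_lt hTpos)
      calc Real.log T + Real.log (K-1) + (T-1) * (Real.log T - Real.log (T-1))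
          = T * (1/T * (Real.log T + Real.log (K-1)) + (T-1)/T * (Real.log T - Real.log (T-1))) := by
            field_simp
        _ ≤ T * Real.log K := this
    -- now compare logs of a and b
    have hla : Real.log a = (1/(T-1)) * Real.log (T * (1 - 1/K)) :=
      Real.log_rpow hbasepos _
    have hlb : Real.log b = (1/T) * Real.log B := Real.log_rpow hBpos _
    have hlbase : Real.log (T * (1 - 1/K)) = Real.log T + Real.log (K-1) - Real.log K := by
      rw [hbase, Real.log_div (by positivity) (ne_of_gt hKpos),
        Real.log_mul (ne_of_gt hTpos) (ne_of_gt hK1pos)]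
    have hlB : Real.log B = Real.log (T-1) + Real.log (K-1) := by
      rw [hBdef, Real.log_mul (ne_of_gt hT1pos) (ne_of_gt hK1pos)]
    have hloggoal : Real.log a ≤ Real.log b := by
      rw [hla, hlb, hlbase, hlB]
      rw [div_mul_eq_mul_div, div_mul_eq_mul_div, one_mul, one_mul,
        div_le_div_iff₀ hT1pos hTpos]
      nlinarith [hlog2]
    have := Real.exp_le_exp.2 hloggoal
    rwa [Real.exp_log (by positivity), Real.exp_log hbpos] at this
  -- conclude
  rw [hg n, hg (n+1)]
  push_cast
  have hsplit : B ^ (((n:ℝ)+1)/T) = B ^ ((n:ℝ)/T) * b := by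
    rw [hbdef, ← Real.rpow_add hBpos]
    ring_nf
  rw [hsplit]
  have hp : 0 < B ^ ((n:ℝ)/T) := by positivity
  rw [div_le_div_iff₀ (by positivity) hp]
  have hn : (0:ℝ) ≤ (n:ℝ) := n.cast_nonneg
  have step : 1 + (a-1)*((n:ℝ)+1) ≤ (1 + (a-1)*(n:ℝ)) * b := by
    nlinarith [mul_nonneg (mul_nonneg (sub_nonneg.2 ha1) (sub_nonneg.2 ha1)) hn,
      mul_nonneg (by nlinarith : (0:ℝ) ≤ 1 + (a-1)*(n:ℝ)) (sub_nonneg.2 key)]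
  calc (1 + (a-1)*((n:ℝ)+1)) * B^((n:ℝ)/T)
      ≤ ((1 + (a-1)*(n:ℝ)) * b) * B^((n:ℝ)/T) :=
        mul_le_mul_of_nonneg_right step hp.le
    _ = (1 + (a-1)*(n:ℝ)) * (B^((n:ℝ)/T) * b) := by ring
end

section
/- Let t ≥ 2, k ≥ 2 be integers with t > 2 or k > 2. Then for every n ≥ 1, 1 + ((t(1-1/k))^(1/(t-1)) - 1) / (1 + ((t(1-1/k))^(1/(t-1)) - 1)·n) ≤ ((t-1)(k-1))^(1/t). -/
-- key sub-lemma
lemma key_sub (t : ℕ) (ht : 2 ≤ t) : (t+1)^(t+1)*(t-1)^(t-1) ≤ 2*t^(2*t) := by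
  obtain ⟨s, rfl⟩ : ∃ s, t = s + 2 := ⟨t-2, by omega⟩
  match s with
  | 0 => norm_num
  | s+1 =>
    have h2 : ((s+4)*(s+2))^(s+2) ≤ ((s+3)^2)^(s+2) := Nat.pow_le_pow_left (by nlinarith) _
    have h3 : (s+4)^2 ≤ 2*(s+3)^2 := by nlinarith
    calc (s+1+2+1)^(s+1+2+1)*(s+1+2-1)^(s+1+2-1)
        = ((s+4)*(s+2))^(s+2) * (s+4)^2 := by
          show (s+4)^(s+4)*(s+2)^(s+2) = _
          rw [mul_pow]
          ring
    _ ≤ ((s+3)^2)^(s+2) * (2*(s+3)^2) := Nat.mul_le_mul h2 h3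
    _ = 2*(s+1+2)^(2*(s+1+2)) := by
          show _ = 2*(s+3)^(2*(s+3))
          rw [← pow_mul]
          ring

lemma key_nat (t : ℕ) (ht : 2 ≤ t) (k : ℕ) (hk : 2 ≤ k) :
    t^t * (k-1) ≤ (t-1)^(t-1) * k^t := by
  induction t, ht using Nat.le_induction with
  | base =>
    obtain ⟨m, rfl⟩ : ∃ m, k = m + 2 := ⟨k-2, by omega⟩
    show 2^2*(m+2-1) ≤ (2-1)^(2-1)*(m+2)^2
    norm_num
    nlinarith
  | succ t ht ih =>
    have hsub : (t+1)^(t+1)*(t-1)^(t-1) ≤ 2*t^(2*t) := key_sub t ht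
    have h0 : 0 < t^t := Nat.pow_pos (by omega)
    have key : t^t * ((t+1)^(t+1)*(k-1)) ≤ t^t * (t^t * k^(t+1)) := by
      calc t^t * ((t+1)^(t+1)*(k-1)) = (t+1)^(t+1) * (t^t * (k-1)) := by ring
      _ ≤ (t+1)^(t+1) * ((t-1)^(t-1) * k^t) := Nat.mul_le_mul_left _ ih
      _ = ((t+1)^(t+1)*(t-1)^(t-1)) * k^t := by ring
      _ ≤ (2*t^(2*t)) * k^t := Nat.mul_le_mul_right _ hsub
      _ ≤ (k*t^(2*t)) * k^t := Nat.mul_le_mul_right _ (Nat.mul_le_mul_right _ hk)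
      _ = t^t * (t^t * k^(t+1)) := by rw [two_mul t, pow_add, pow_succ]; ring
    have := Nat.le_of_mul_le_mul_left key h0
    simpa using this

theorem stmt5 (t k : ℤ) (ht : 2 ≤ t) (hk : 2 ≤ k) (htk : 2 < t ∨ 2 < k)
    (n : ℕ) (hn : 1 ≤ n) :
    1 + (((t : ℝ) * (1 - 1 / (k : ℝ))) ^ ((1 : ℝ) / ((t : ℝ) - 1)) - 1) /
        (1 + (((t : ℝ) * (1 - 1 / (k : ℝ))) ^ ((1 : ℝ) / ((t : ℝ) - 1)) - 1) * (n : ℝ)) ≤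
      (((t : ℝ) - 1) * ((k : ℝ) - 1)) ^ ((1 : ℝ) / (t : ℝ)) := by
  obtain ⟨S, rfl⟩ : ∃ S : ℕ, t = (S : ℤ) + 2 := ⟨(t-2).toNat, by omega⟩
  obtain ⟨M, rfl⟩ : ∃ M : ℕ, k = (M : ℤ) + 2 := ⟨(k-2).toNat, by omega⟩
  clear ht hk htk hn
  push_cast
  set s := (S : ℝ) with hsdef
  set m := (M : ℝ) with hmdef
  have hs : 0 ≤ s := Nat.cast_nonneg S
  have hm : 0 ≤ m := Nat.cast_nonneg M
  have hm2 : (0:ℝ) < m + 2 := by linarith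
  have hs1 : (0:ℝ) < s + 1 := by linarith
  have e1 : s + 2 - 1 = s + 1 := by ring
  have e2 : m + 2 - 1 = m + 1 := by ring
  rw [e1, e2]
  set x : ℝ := (s+2) * (1 - 1/(m+2)) with hxdef
  have hxeq : x = (s+2)*(m+1)/(m+2) := by
    rw [hxdef, eq_div_iff hm2.ne']
    field_simp
    ring
  have h1x : 1 ≤ x := by
    rw [hxeq, le_div_iff₀ hm2]
    nlinarith
  have hx0 : 0 ≤ x := by linarith
  set a : ℝ := x ^ ((1:ℝ)/(s+1)) with hadef
  set y : ℝ := (s+1)*(m+1) with hydef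
  have hy0 : 0 ≤ y := by positivity
  set b : ℝ := y ^ ((1:ℝ)/(s+2)) with hbdef
  have ha1 : 1 ≤ a := Real.one_le_rpow h1x (by positivity)
  have hb0 : 0 ≤ b := Real.rpow_nonneg hy0 _
  have hab : a ≤ b := by
    have hN : ((((S+2)*(S+1) : ℕ)) : ℝ) = (s+2)*(s+1) := by push_cast; ring
    have hApow : a ^ ((S+2)*(S+1)) = x ^ (S+2) := by
      rw [← Real.rpow_natCast a, ← Real.rpow_natCast x, hadef,
        ← Real.rpow_mul hx0, hN]
      congr 1
      push_cast
      field_simp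
      rfl
    have hBpow : b ^ ((S+2)*(S+1)) = y ^ (S+1) := by
      rw [← Real.rpow_natCast b, ← Real.rpow_natCast y, hbdef,
        ← Real.rpow_mul hy0, hN]
      congr 1
      push_cast
      field_simp
      rfl
    have hkey : (s+2)^(S+2)*(m+1) ≤ (s+1)^(S+1)*(m+2)^(S+2) := by
      have h := key_nat (S+2) (by omega) (M+2) (by omega)
      have h2 : (S+2)^(S+2) * (M+1) ≤ (S+1)^(S+1) * (M+2)^(S+2) := by
        simpa using h
      rw [hsdef, hmdef]
      exact_mod_cast h2
    have hmain : x ^ (S+2) ≤ y ^ (S+1) := by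
      rw [hxeq, div_pow, div_le_iff₀ (by positivity)]
      calc ((s+2)*(m+1))^(S+2) = ((s+2)^(S+2)*(m+1)) * (m+1)^(S+1) := by
            rw [mul_pow, pow_succ]; ring
      _ ≤ ((s+1)^(S+1)*(m+2)^(S+2)) * (m+1)^(S+1) :=
            mul_le_mul_of_nonneg_right hkey (by positivity)
      _ = y ^ (S+1) * (m+2)^(S+2) := by rw [hydef, mul_pow]; ring
    refine le_of_pow_le_pow_left₀ (n := (S+2)*(S+1)) ?_ hb0 ?_
    · positivity
    · rw [hApow, hBpow]; exact hmain
  have hd : (1:ℝ) ≤ 1 + (a-1)*(n:ℝ) := by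
    have : 0 ≤ (a-1)*(n:ℝ) := mul_nonneg (by linarith) (Nat.cast_nonneg n)
    linarith
  have hdiv : (a-1)/(1+(a-1)*(n:ℝ)) ≤ a-1 := div_le_self (by linarith) hd
  linarith
end

section
/- Let t ≥ 2, k ≥ 2 be integers and define g(n) = ĝ(n)/((t-1)(k-1))^(n/t) where ĝ(n) = 1 + ((t(1-1/k))^(1/(t-1)) - 1)·n. Then for every n ≥ 1, g(n-1)·g(n)^(t-2) + (k-1)·g(n+1)^(t-1) ≥ (t/(t-1))·((t-1)(k-1))^(1/t)·g(n)^(t-1). -/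
private lemma key_pow (s : ℕ) (x c : ℝ) (hx : 0 ≤ x) (hc : 0 ≤ c) :
    x ^ (s + 1) + ((s : ℝ) + 1) * c * x ^ s ≤ (x + c) ^ (s + 1) := by
  induction s with
  | zero => simp
  | succ n ih =>
    have h2 : (x ^ (n + 1) + ((n : ℝ) + 1) * c * x ^ n) * (x + c)
        ≤ (x + c) ^ (n + 1) * (x + c) :=
      mul_le_mul_of_nonneg_right ih (by linarith)
    have hxn : 0 ≤ x ^ n := pow_nonneg hx n
    have hpow : (x + c) ^ (n + 1 + 1) = (x + c) ^ (n + 1) * (x + c) := by ring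
    have p1 : x ^ (n + 1 + 1) = x ^ (n + 1) * x := pow_succ x (n + 1)
    have p2 : x ^ (n + 1) = x ^ n * x := pow_succ x n
    have hn0 : (0:ℝ) ≤ (n : ℝ) := Nat.cast_nonneg n
    rw [hpow, p1, p2]
    rw [p2] at h2
    push_cast
    nlinarith [mul_nonneg hc (mul_nonneg hc hxn),
      mul_nonneg hn0 (mul_nonneg hc (mul_nonneg hc hxn))]

private lemma helper (s m : ℕ) (T K x c A : ℝ)
    (hT : T = (s : ℝ) + 2) (hK : (2:ℝ) ≤ K)
    (hA : 0 < A) (hAT : A ^ (s + 2) = (T - 1) * (K - 1))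
    (hc : 0 ≤ c) (hxc : 0 < x - c) :
    (x - c) / A ^ m * (x / A ^ (m + 1)) ^ s + (K - 1) * ((x + c) / A ^ (m + 1 + 1)) ^ (s + 1) ≥
      T / (T - 1) * A * (x / A ^ (m + 1)) ^ (s + 1) := by
  have hs0 : (0:ℝ) ≤ (s : ℝ) := Nat.cast_nonneg s
  have hT1 : 0 < T - 1 := by rw [hT]; linarith
  have hx : 0 < x := by linarith
  have hK1 : 0 < K - 1 := by linarith
  have hD : 0 < A ^ (m + (m + 1) * s) := pow_pos hA _
  have hDne : A ^ (m + (m + 1) * s) ≠ 0 := ne_of_gt hD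
  have hAne : A ≠ 0 := ne_of_gt hA
  have hT1ne : T - 1 ≠ 0 := ne_of_gt hT1
  have hK1ne : K - 1 ≠ 0 := ne_of_gt hK1
  have key := key_pow s x c (le_of_lt hx) hc
  have h2 : T * x ^ (s + 1) ≤ (T - 1) * ((x - c) * x ^ s) + (x + c) ^ (s + 1) := by
    rw [hT]
    have hps : x ^ (s + 1) = x ^ s * x := pow_succ x s
    nlinarith [key]
  have e1 : (x - c) / A ^ m * (x / A ^ (m + 1)) ^ s
      = ((x - c) * x ^ s) / A ^ (m + (m + 1) * s) := by
    rw [div_pow, div_mul_div_comm, ← pow_mul, ← pow_add]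
  have e2 : (K - 1) * ((x + c) / A ^ (m + 1 + 1)) ^ (s + 1)
      = ((x + c) ^ (s + 1) / (T - 1)) / A ^ (m + (m + 1) * s) := by
    have h5 : A ^ ((m + 1 + 1) * (s + 1)) = ((T - 1) * (K - 1)) * A ^ (m + (m + 1) * s) := by
      rw [← hAT, ← pow_add]; congr 1; ring
    rw [div_pow, ← pow_mul, h5]
    field_simp
  have e3 : T / (T - 1) * A * (x / A ^ (m + 1)) ^ (s + 1)
      = (T / (T - 1) * x ^ (s + 1)) / A ^ (m + (m + 1) * s) := by
    have h5 : A ^ ((m + 1) * (s + 1)) = A ^ (m + (m + 1) * s) * A := by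
      rw [← pow_succ]; congr 1; ring
    rw [div_pow, ← pow_mul, h5]
    field_simp
  rw [ge_iff_le, e1, e2, e3, ← add_div]
  gcongr
  rw [div_mul_eq_mul_div, div_le_iff₀ hT1]
  have expand : ((x - c) * x ^ s + (x + c) ^ (s + 1) / (T - 1)) * (T - 1)
      = (T - 1) * ((x - c) * x ^ s) + (x + c) ^ (s + 1) := by
    field_simp
  rw [expand]
  exact h2

theorem stmt10 (t k : ℕ) (ht : 2 ≤ t) (hk : 2 ≤ k)
    (ghat : ℕ → ℝ)
    (hghat : ∀ n : ℕ, ghat n =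
      1 + (((t : ℝ) * (1 - 1 / (k : ℝ))) ^ ((1 : ℝ) / ((t : ℝ) - 1)) - 1) * (n : ℝ))
    (g : ℕ → ℝ)
    (hg : ∀ n : ℕ, g n = ghat n / (((t : ℝ) - 1) * ((k : ℝ) - 1)) ^ ((n : ℝ) / (t : ℝ))) :
    ∀ n : ℕ, 1 ≤ n →
      g (n - 1) * g n ^ (t - 2) + ((k : ℝ) - 1) * g (n + 1) ^ (t - 1) ≥
        ((t : ℝ) / ((t : ℝ) - 1)) * (((t : ℝ) - 1) * ((k : ℝ) - 1)) ^ ((1 : ℝ) / (t : ℝ)) *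
          g n ^ (t - 1) := by
  obtain ⟨s, rfl⟩ : ∃ s, t = s + 2 := ⟨t - 2, by omega⟩
  intro n hn
  obtain ⟨m, rfl⟩ : ∃ m, n = m + 1 := ⟨n - 1, by omega⟩
  have es1 : s + 2 - 1 = s + 1 := rfl
  have es2 : s + 2 - 2 = s := rfl
  have em : m + 1 - 1 = m := rfl
  simp only [hg, es1, es2, em]
  have hTcast : ((s + 2 : ℕ) : ℝ) = (s : ℝ) + 2 := by push_cast; ring
  have hKcast : (2 : ℝ) ≤ (k : ℝ) := by exact_mod_cast hk
  have hs0 : (0:ℝ) ≤ (s : ℝ) := Nat.cast_nonneg s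
  have hb0 : (0:ℝ) < (((s + 2 : ℕ) : ℝ) - 1) * ((k : ℝ) - 1) := by
    rw [hTcast]; nlinarith
  set A : ℝ := ((((s + 2 : ℕ) : ℝ) - 1) * ((k : ℝ) - 1)) ^ ((1 : ℝ) / ((s + 2 : ℕ) : ℝ))
    with hAdef
  have hA : 0 < A := Real.rpow_pos_of_pos hb0 _
  have hTne : ((s + 2 : ℕ) : ℝ) ≠ 0 := by rw [hTcast]; linarith
  have hApow : ∀ j : ℕ, ((((s + 2 : ℕ) : ℝ) - 1) * ((k : ℝ) - 1)) ^ ((j : ℝ) / ((s + 2 : ℕ) : ℝ))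
      = A ^ j := by
    intro j
    rw [hAdef, ← Real.rpow_natCast (_ ^ _) j, ← Real.rpow_mul (le_of_lt hb0)]
    congr 1
    ring
  have hAT : A ^ (s + 2) = (((s + 2 : ℕ) : ℝ) - 1) * ((k : ℝ) - 1) := by
    rw [← hApow (s + 2), div_self hTne, Real.rpow_one]
  set c : ℝ := (((s + 2 : ℕ) : ℝ) * (1 - 1 / (k : ℝ))) ^ ((1 : ℝ) / (((s + 2 : ℕ) : ℝ) - 1)) - 1
    with hcdef
  have hc : 0 ≤ c := by
    have h1k : (1 : ℝ) / (k : ℝ) ≤ 1 / 2 :=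
      one_div_le_one_div_of_le (by norm_num) hKcast
    have hbase2 : (1 : ℝ) ≤ ((s + 2 : ℕ) : ℝ) * (1 - 1 / (k : ℝ)) := by
      rw [hTcast]; nlinarith
    have hexp : (0 : ℝ) ≤ (1 : ℝ) / (((s + 2 : ℕ) : ℝ) - 1) := by
      rw [hTcast]
      exact le_of_lt (one_div_pos.mpr (by linarith))
    have h1 : (1 : ℝ) ≤ (((s + 2 : ℕ) : ℝ) * (1 - 1 / (k : ℝ)))
        ^ ((1 : ℝ) / (((s + 2 : ℕ) : ℝ) - 1)) := by
      calc (1 : ℝ) = (((s + 2 : ℕ) : ℝ) * (1 - 1 / (k : ℝ))) ^ (0 : ℝ) :=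
            (Real.rpow_zero _).symm
        _ ≤ _ := Real.rpow_le_rpow_of_exponent_le hbase2 hexp
    rw [hcdef]; linarith
  set x : ℝ := 1 + c * ((m : ℝ) + 1) with hxdef
  have hgm : ghat m = x - c := by rw [hghat, hxdef]; push_cast; ring
  have hgx : ghat (m + 1) = x := by rw [hghat, hxdef]; push_cast; ring
  have hgp : ghat (m + 1 + 1) = x + c := by rw [hghat, hxdef]; push_cast; ring
  have hm0 : (0 : ℝ) ≤ (m : ℝ) := Nat.cast_nonneg m
  have hxc : 0 < x - c := by rw [hxdef]; nlinarith [mul_nonneg hc hm0]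
  rw [hApow m, hApow (m + 1), hApow (m + 1 + 1), hgm, hgx, hgp]
  exact helper s m _ _ x c A hTcast hKcast hA hAT hc hxc
end

section
/- Let H be a finite connected k-regular t-uniform hypergraph on vertex set V with adjacency tensor 𝒜 (entries 1/(t-1)! on edges). Fix a vertex o and let x(v) = g(dist(o,v)) where g is the non-increasing function g(n) = ĝ(n)/((t-1)(k-1))^(n/t). Then (𝒜x)_v ≥ ϱ·x(v)^(t-1) for every vertex v, where ϱ = (t/(t-1))·((t-1)(k-1))^(1/t). -/
lemma aux_3t (t : ℕ) (ht : 4 ≤ t) : 3 * t ≤ 2 ^ t := by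
  induction t with
  | zero => omega
  | succ n ih =>
    rcases Nat.lt_or_ge n 4 with h | h
    · interval_cases n <;> omega
    · have := ih (by omega)
      have : 2 ^ n ≥ 3 * n := this
      calc 3 * (n+1) ≤ 2 * (3 * n) := by omega
        _ ≤ 2 * 2 ^ n := by omega
        _ = 2 ^ (n+1) := by ring

lemma aux_kpow (t k : ℕ) (ht : 2 ≤ t) (hk : 2 ≤ k) : 2 ^ t * (k - 1) ≤ k ^ t := by
  induction k with
  | zero => omega
  | succ n ih =>
    rcases Nat.lt_or_ge n 2 with h | h
    · interval_cases n
      · simp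
      · simpa using Nat.le_refl (2^t)
    · have ihn := ih h
      -- (n-1) * (n+1)^t ≥ n^(t+1)
      have h1 : (n+1)^t ≥ n^(t-2) * (n+1)^2 := by
        calc (n+1)^t = (n+1)^(t-2) * (n+1)^2 := by
              rw [← pow_add]; congr 1; omega
          _ ≥ n^(t-2) * (n+1)^2 :=
              Nat.mul_le_mul_right _ (Nat.pow_le_pow_left (by omega) _)
      have h2 : (n-1) * ((n+1)^2) ≥ n^3 := by
        obtain ⟨m, rfl⟩ : ∃ m, n = m + 2 := ⟨n - 2, by omega⟩
        have : m + 2 - 1 = m + 1 := by omega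
        rw [this]; nlinarith
      have h3 : (n-1) * (n+1)^t ≥ n^(t+1) := by
        calc (n-1) * (n+1)^t ≥ (n-1) * (n^(t-2) * (n+1)^2) := Nat.mul_le_mul_left _ h1
          _ = n^(t-2) * ((n-1) * (n+1)^2) := by ring
          _ ≥ n^(t-2) * n^3 := Nat.mul_le_mul_left _ h2
          _ = n^(t+1) := by rw [← pow_add]; congr 1; omega
      have h4 : n^(t+1) = n * n^t := by ring
      have h5 : n * (2^t * (n-1)) ≤ n * n^t := Nat.mul_le_mul_left _ ihn
      -- (n-1) * (n+1)^t ≥ n * (2^t * (n-1)), so (n+1)^t ≥ 2^t * n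
      have h6 : (n-1) * (n+1)^t ≥ (n-1) * (2^t * n) := by
        calc (n-1) * (n+1)^t ≥ n^(t+1) := h3
          _ = n * n^t := h4
          _ ≥ n * (2^t * (n-1)) := h5
          _ = (n-1) * (2^t * n) := by ring
      have h7 : (n+1)^t ≥ 2^t * n := Nat.le_of_mul_le_mul_left h6 (by omega)
      simpa using h7

lemma real_tpow (t : ℕ) (ht : 2 ≤ t) : (t:ℝ)^t ≤ 2^t * ((t:ℝ)-1)^(t-1) := by
  rcases Nat.lt_or_ge t 4 with h | h
  · interval_cases t <;> norm_num
  · have htR : (4:ℝ) ≤ (t:ℝ) := by exact_mod_cast h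
    have ht1 : (1:ℝ) ≤ (t:ℝ) - 1 := by linarith
    set u : ℝ := (t:ℝ) - 1 with hu
    have hu0 : 0 < u := by linarith
    have hcast : ((t - 1 : ℕ) : ℝ) = u := by
      have h1 : (1:ℕ) ≤ t := by omega
      rw [hu]
      push_cast [h1]
      ring
    have h1 : (1 + 1/u) ≤ Real.exp (1/u) := by
      have := Real.add_one_le_exp (1/u); linarith
    have h2 : ((t:ℝ))^(t-1) ≤ Real.exp 1 * u^(t-1) := by
      have e1 : (t:ℝ) = u * (1 + 1/u) := by field_simp; rw [hu]; ring
      have e2 : ((t-1:ℕ):ℝ) * (1/u) = 1 := by rw [hcast]; field_simp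
      calc ((t:ℝ))^(t-1) = u^(t-1) * (1+1/u)^(t-1) := by rw [e1, mul_pow]
        _ ≤ u^(t-1) * Real.exp (1/u)^(t-1) := by
            apply mul_le_mul_of_nonneg_left (pow_le_pow_left₀ (by positivity) h1 _) (by positivity)
        _ = u^(t-1) * Real.exp (((t-1:ℕ):ℝ) * (1/u)) := by rw [Real.exp_nat_mul]
        _ = Real.exp 1 * u^(t-1) := by rw [e2]; ring
    have h3 : Real.exp 1 < 3 := by
      have := Real.exp_one_lt_d9; linarith
    have h4 : (3:ℝ) * (t:ℝ) ≤ 2^t := by exact_mod_cast aux_3t t h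
    calc (t:ℝ)^t = (t:ℝ) * (t:ℝ)^(t-1) := by
          rw [← pow_succ']; congr 1; omega
      _ ≤ (t:ℝ) * (Real.exp 1 * u^(t-1)) := by
          apply mul_le_mul_of_nonneg_left h2 (by positivity)
      _ ≤ (t:ℝ) * (3 * u^(t-1)) := by
          apply mul_le_mul_of_nonneg_left _ (by positivity)
          apply mul_le_mul_of_nonneg_right h3.le (by positivity)
      _ = (3 * (t:ℝ)) * u^(t-1) := by ring
      _ ≤ 2^t * u^(t-1) := mul_le_mul_of_nonneg_right h4 (by positivity)

lemma keyNK (t k : ℕ) (ht : 2 ≤ t) (hk : 2 ≤ k) :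
    (t:ℝ)^t * ((k:ℝ)-1) ≤ ((t:ℝ)-1)^(t-1) * (k:ℝ)^t := by
  have htR : (2:ℝ) ≤ (t:ℝ) := by exact_mod_cast ht
  have hkR : (2:ℝ) ≤ (k:ℝ) := by exact_mod_cast hk
  have htm : (0:ℝ) ≤ (t:ℝ) - 1 := by linarith
  have h2 : (2:ℝ)^t * ((k:ℝ)-1) ≤ (k:ℝ)^t := by
    have hc : ((2^t * (k-1) : ℕ) : ℝ) ≤ ((k^t : ℕ) : ℝ) := by
      exact_mod_cast aux_kpow t k ht hk
    have h1k : (1:ℕ) ≤ k := by omega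
    push_cast [h1k] at hc
    convert hc using 2
  calc (t:ℝ)^t * ((k:ℝ)-1) ≤ (2^t * ((t:ℝ)-1)^(t-1)) * ((k:ℝ)-1) := by
        apply mul_le_mul_of_nonneg_right (real_tpow t ht); linarith
    _ = ((t:ℝ)-1)^(t-1) * (2^t * ((k:ℝ)-1)) := by ring
    _ ≤ ((t:ℝ)-1)^(t-1) * (k:ℝ)^t :=
        mul_le_mul_of_nonneg_left h2 (pow_nonneg htm _)

lemma keyA (t k : ℕ) (ht : 2 ≤ t) (hk : 2 ≤ k) :
    ((t:ℝ) * (1 - 1/(k:ℝ)))^t ≤ (((t:ℝ)-1) * ((k:ℝ)-1))^(t-1) := by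
  have htR : (2:ℝ) ≤ (t:ℝ) := by exact_mod_cast ht
  have hkR : (2:ℝ) ≤ (k:ℝ) := by exact_mod_cast hk
  have hk0 : (0:ℝ) < k := by linarith
  have e1 : (t:ℝ) * (1 - 1/(k:ℝ)) = (t:ℝ)*((k:ℝ)-1)/(k:ℝ) := by field_simp
  rw [e1, div_pow, div_le_iff₀ (by positivity)]
  have hnk := keyNK t k ht hk
  have et : t - 1 + 1 = t := by omega
  have ekt : ((k:ℝ)-1)^t = ((k:ℝ)-1)^(t-1) * ((k:ℝ)-1) := by rw [← pow_succ, et]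
  calc ((t:ℝ)*((k:ℝ)-1))^t = (t:ℝ)^t * ((k:ℝ)-1) * ((k:ℝ)-1)^(t-1) := by
        rw [mul_pow, ekt]; ring
    _ ≤ (((t:ℝ)-1)^(t-1) * (k:ℝ)^t) * ((k:ℝ)-1)^(t-1) :=
        mul_le_mul_of_nonneg_right hnk (pow_nonneg (by linarith) _)
    _ = (((t:ℝ)-1) * ((k:ℝ)-1))^(t-1) * (k:ℝ)^t := by rw [mul_pow]; ring

lemma keyC (t k : ℕ) (ht : 2 ≤ t) (hk : 2 ≤ k) :
    ((t:ℝ) * (1 - 1/(k:ℝ))) ^ ((1:ℝ)/((t:ℝ)-1)) ≤ (((t:ℝ)-1)*((k:ℝ)-1)) ^ ((1:ℝ)/(t:ℝ)) := by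
  have htR : (2:ℝ) ≤ (t:ℝ) := by exact_mod_cast ht
  have hkR : (2:ℝ) ≤ (k:ℝ) := by exact_mod_cast hk
  have hinv : 1/(k:ℝ) ≤ 1/2 := by
    apply one_div_le_one_div_of_le <;> linarith
  have hA1 : (1:ℝ) ≤ (t:ℝ) * (1 - 1/(k:ℝ)) := by nlinarith
  have hq1 : (1:ℝ) ≤ ((t:ℝ)-1)*((k:ℝ)-1) := by nlinarith
  have hA0 : (0:ℝ) < (t:ℝ) * (1 - 1/(k:ℝ)) := by linarith
  have hq0 : (0:ℝ) < ((t:ℝ)-1)*((k:ℝ)-1) := by linarith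
  have ht0 : (t:ℝ) ≠ 0 := by linarith
  have ht1 : (t:ℝ) - 1 ≠ 0 := by linarith
  have e1 : ((t:ℝ) * (1 - 1/(k:ℝ))) ^ ((1:ℝ)/((t:ℝ)-1))
      = (((t:ℝ) * (1 - 1/(k:ℝ)))^(t:ℕ)) ^ ((1:ℝ)/((t:ℝ)*((t:ℝ)-1))) := by
    rw [← Real.rpow_natCast ((t:ℝ) * (1 - 1/(k:ℝ))) t, ← Real.rpow_mul hA0.le]
    congr 1
    field_simp
  have e2 : (((t:ℝ)-1)*((k:ℝ)-1)) ^ ((1:ℝ)/(t:ℝ))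
      = ((((t:ℝ)-1)*((k:ℝ)-1))^(t-1:ℕ)) ^ ((1:ℝ)/((t:ℝ)*((t:ℝ)-1))) := by
    rw [← Real.rpow_natCast (((t:ℝ)-1)*((k:ℝ)-1)) (t-1), ← Real.rpow_mul hq0.le]
    congr 1
    have : ((t-1:ℕ):ℝ) = (t:ℝ)-1 := by
      have h1 : (1:ℕ) ≤ t := by omega
      push_cast [h1]; ring
    rw [this]
    field_simp
  rw [e1, e2]
  have hz : (0:ℝ) ≤ 1/((t:ℝ)*((t:ℝ)-1)) := by
    apply div_nonneg zero_le_one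
    nlinarith
  exact Real.rpow_le_rpow (pow_nonneg hA0.le t) (keyA t k ht hk) hz

lemma convkey (s : ℕ) (b δ : ℝ) (hb : 1 ≤ b) (hδ : 0 ≤ δ) :
    ((s:ℝ)+2) * b^(s+1) ≤ ((s:ℝ)+1) * (b-δ) * b^s + (b+δ)^(s+1) := by
  have hb0 : 0 < b := by linarith
  have hBer : (1 + ((s+1:ℕ):ℝ) * (δ/b)) ≤ (1 + δ/b)^(s+1) :=
    one_add_mul_le_pow (le_trans (by norm_num) (div_nonneg hδ hb0.le)) (s+1)
  have e : (1 + δ/b)^(s+1) * b^(s+1) = (b+δ)^(s+1) := by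
    rw [← mul_pow]; congr 1; field_simp
  have h2 : (1 + ((s+1:ℕ):ℝ)*(δ/b)) * b^(s+1) ≤ (b+δ)^(s+1) := by
    rw [← e]; exact mul_le_mul_of_nonneg_right hBer (by positivity)
  have e3 : (1 + ((s+1:ℕ):ℝ)*(δ/b)) * b^(s+1) = b^(s+1) + ((s:ℝ)+1)*δ*b^s := by
    push_cast
    field_simp
    ring
  have h4 : b^(s+1) + ((s:ℝ)+1)*δ*b^s ≤ (b+δ)^(s+1) := e3 ▸ h2
  calc ((s:ℝ)+2)*b^(s+1) = ((s:ℝ)+1)*(b-δ)*b^s + (b^(s+1) + ((s:ℝ)+1)*δ*b^s) := by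
        rw [pow_succ]; ring
    _ ≤ ((s:ℝ)+1)*(b-δ)*b^s + (b+δ)^(s+1) := by linarith

lemma keyC' (s k : ℕ) (hk : 2 ≤ k) :
    (((s:ℝ)+2) * (1 - 1/(k:ℝ))) ^ ((1:ℝ)/((s:ℝ)+1))
      ≤ (((s:ℝ)+1)*((k:ℝ)-1)) ^ ((1:ℝ)/((s:ℝ)+2)) := by
  have h := keyC (s+2) k (by omega) hk
  have hc2 : ((s+2:ℕ):ℝ) = (s:ℝ)+2 := by push_cast; ring
  rw [hc2] at h
  rw [show (s:ℝ)+2-1 = (s:ℝ)+1 from by ring] at h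
  exact h

lemma analytic (s k : ℕ) (hk : 2 ≤ k) (g : ℕ → ℝ)
    (hg : ∀ n : ℕ, g n =
      (1 + ((((s:ℝ)+2) * (1 - 1 / (k:ℝ))) ^ ((1:ℝ)/((s:ℝ)+1)) - 1) * (n:ℝ)) /
        (((s:ℝ)+1) * ((k:ℝ)-1)) ^ ((n:ℝ)/((s:ℝ)+2))) :
    (∀ n : ℕ, 0 < g n) ∧ (∀ m n : ℕ, m ≤ n → g n ≤ g m) ∧
    (((s:ℝ)+2)/((s:ℝ)+1)) * ((((s:ℝ)+1)*((k:ℝ)-1)) ^ ((1:ℝ)/((s:ℝ)+2))) * g 0 ^ (s+1)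
        ≤ (k:ℝ) * g 1 ^ (s+1) ∧
    (∀ m : ℕ,
      (((s:ℝ)+2)/((s:ℝ)+1)) * ((((s:ℝ)+1)*((k:ℝ)-1)) ^ ((1:ℝ)/((s:ℝ)+2))) * g (m+1) ^ (s+1)
        ≤ g m * g (m+1) ^ s + ((k:ℝ)-1) * g (m+2) ^ (s+1)) := by
  have hkR : (2:ℝ) ≤ (k:ℝ) := by exact_mod_cast hk
  have hS0 : (0:ℝ) ≤ (s:ℝ) := Nat.cast_nonneg s
  have hq1 : (1:ℝ) ≤ ((s:ℝ)+1)*((k:ℝ)-1) := by nlinarith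
  have hq0 : (0:ℝ) < ((s:ℝ)+1)*((k:ℝ)-1) := by linarith
  have hinv : 1/(k:ℝ) ≤ 1/2 := by
    apply one_div_le_one_div_of_le <;> linarith
  have hA1 : (1:ℝ) ≤ ((s:ℝ)+2) * (1 - 1/(k:ℝ)) := by nlinarith
  have hA0 : (0:ℝ) < ((s:ℝ)+2) * (1 - 1/(k:ℝ)) := by linarith
  have hS1 : (0:ℝ) < (s:ℝ)+1 := by linarith
  have hS2 : (0:ℝ) < (s:ℝ)+2 := by linarith
  obtain ⟨c, hcdef⟩ : ∃ c : ℝ, c = (((s:ℝ)+2) * (1 - 1/(k:ℝ))) ^ ((1:ℝ)/((s:ℝ)+1)) := ⟨_, rfl⟩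
  obtain ⟨Q, hQdef⟩ : ∃ Q : ℝ, Q = (((s:ℝ)+1)*((k:ℝ)-1)) ^ ((1:ℝ)/((s:ℝ)+2)) := ⟨_, rfl⟩
  obtain ⟨δ, hδdef⟩ : ∃ d : ℝ, d = c - 1 := ⟨_, rfl⟩
  have hc1 : 1 ≤ c := hcdef ▸ Real.one_le_rpow hA1 (by positivity)
  have hQ1 : 1 ≤ Q := hQdef ▸ Real.one_le_rpow hq1 (by positivity)
  have hQ0 : (0:ℝ) < Q := by linarith
  have hδ0 : 0 ≤ δ := by rw [hδdef]; linarith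
  have hcQ : c ≤ Q := by rw [hcdef, hQdef]; exact keyC' s k hk
  have hQpow : ∀ n : ℕ, ((((s:ℝ)+1)*((k:ℝ)-1)) ^ ((n:ℝ)/((s:ℝ)+2))) = Q^n := by
    intro n
    rw [hQdef, ← Real.rpow_natCast ((((s:ℝ)+1)*((k:ℝ)-1)) ^ ((1:ℝ)/((s:ℝ)+2))) n,
      ← Real.rpow_mul hq0.le]
    congr 1
    field_simp
  have hQs2 : Q^(s+2) = ((s:ℝ)+1)*((k:ℝ)-1) := by
    rw [← hQpow (s+2)]
    rw [show (((s+2:ℕ)):ℝ)/((s:ℝ)+2) = 1 from by push_cast; field_simp]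
    exact Real.rpow_one _
  have hg3 : ∀ n : ℕ, g n = (1 + δ*(n:ℝ))/Q^n := by
    intro n
    rw [hg n, hQpow n, ← hcdef, ← hδdef]
  have hnum1 : ∀ n : ℕ, (1:ℝ) ≤ 1 + δ*(n:ℝ) := by
    intro n
    nlinarith [Nat.cast_nonneg (α := ℝ) n]
  have hgpos : ∀ n : ℕ, 0 < g n := by
    intro n
    rw [hg3 n]
    exact div_pos (by linarith [hnum1 n]) (pow_pos hQ0 n)
  have hstep : ∀ n : ℕ, g (n+1) ≤ g n := by
    intro n
    rw [hg3 n, hg3 (n+1), div_le_div_iff₀ (pow_pos hQ0 _) (pow_pos hQ0 _)]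
    have e : (1 + δ*((n+1:ℕ):ℝ)) ≤ (1 + δ*(n:ℝ))*Q := by
      have h1 : (1 + δ*((n+1:ℕ):ℝ)) ≤ (1 + δ*(n:ℝ))*c := by
        have hc : c = δ + 1 := by rw [hδdef]; ring
        rw [hc]
        push_cast
        nlinarith [mul_nonneg (mul_nonneg hδ0 hδ0) (Nat.cast_nonneg (α := ℝ) n)]
      have h2 : (1 + δ*(n:ℝ))*c ≤ (1 + δ*(n:ℝ))*Q :=
        mul_le_mul_of_nonneg_left hcQ (by linarith [hnum1 n])
      linarith
    calc (1 + δ*((n+1:ℕ):ℝ)) * Q^n ≤ ((1 + δ*(n:ℝ))*Q) * Q^n :=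
          mul_le_mul_of_nonneg_right e (by positivity)
      _ = (1+δ*(n:ℝ)) * Q^(n+1) := by rw [pow_succ]; ring
  have hmono : ∀ m n : ℕ, m ≤ n → g n ≤ g m := fun m n h =>
    antitone_nat_of_succ_le hstep h
  have hg0 : g 0 = 1 := by rw [hg3 0]; norm_num
  have hcpow : c^(s+1) = ((s:ℝ)+2) * (1 - 1/(k:ℝ)) := by
    rw [hcdef, ← Real.rpow_natCast ((((s:ℝ)+2) * (1 - 1/(k:ℝ))) ^ ((1:ℝ)/((s:ℝ)+1))) (s+1),
      ← Real.rpow_mul hA0.le,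
      show ((1:ℝ)/((s:ℝ)+1)) * ((s+1:ℕ):ℝ) = 1 from by push_cast; field_simp,
      Real.rpow_one]
  refine ⟨hgpos, hmono, ?_, ?_⟩
  · -- root case
    rw [hg0, one_pow, mul_one, ← hQdef, hg3 1]
    have e1 : (1 + δ*((1:ℕ):ℝ)) = c := by rw [hδdef]; push_cast; ring
    rw [e1, div_pow, pow_one]
    rw [show (k:ℝ) * (c^(s+1)/Q^(s+1)) = (k:ℝ)*c^(s+1)/Q^(s+1) from by ring,
      le_div_iff₀ (pow_pos hQ0 _)]
    have hfin : ((s:ℝ)+2)/((s:ℝ)+1)*Q*Q^(s+1) = (k:ℝ) * c^(s+1) := by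
      calc ((s:ℝ)+2)/((s:ℝ)+1)*Q*Q^(s+1) = ((s:ℝ)+2)/((s:ℝ)+1)*Q^(s+2) := by
            rw [pow_succ]; ring
        _ = ((s:ℝ)+2)/((s:ℝ)+1)*(((s:ℝ)+1)*((k:ℝ)-1)) := by rw [hQs2]
        _ = ((s:ℝ)+2)*((k:ℝ)-1) := by field_simp
        _ = (k:ℝ) * c^(s+1) := by rw [hcpow]; field_simp
    exact le_of_eq hfin
  · -- general case
    intro m
    obtain ⟨a, hadef⟩ : ∃ a : ℝ, a = 1 + δ*((m:ℕ):ℝ) := ⟨_, rfl⟩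
    obtain ⟨b, hbdef⟩ : ∃ b : ℝ, b = 1 + δ*((m+1:ℕ):ℝ) := ⟨_, rfl⟩
    obtain ⟨c2, hc2def⟩ : ∃ c2 : ℝ, c2 = 1 + δ*((m+2:ℕ):ℝ) := ⟨_, rfl⟩
    have hb1 : 1 ≤ b := hbdef ▸ hnum1 (m+1)
    have hab : a = b - δ := by rw [hadef, hbdef]; push_cast; ring
    have hc2b : c2 = b + δ := by rw [hc2def, hbdef]; push_cast; ring
    have key : ((s:ℝ)+2)*((k:ℝ)-1)*b^(s+1)
        ≤ ((s:ℝ)+1)*((k:ℝ)-1)*a*b^s + ((k:ℝ)-1)*c2^(s+1) := by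
      have key0 := convkey s b δ hb1 hδ0
      have hK1 : (0:ℝ) ≤ (k:ℝ) - 1 := by linarith
      calc ((s:ℝ)+2)*((k:ℝ)-1)*b^(s+1) = ((k:ℝ)-1)*(((s:ℝ)+2)*b^(s+1)) := by ring
        _ ≤ ((k:ℝ)-1)*(((s:ℝ)+1)*(b-δ)*b^s + (b+δ)^(s+1)) :=
            mul_le_mul_of_nonneg_left key0 hK1
        _ = ((s:ℝ)+1)*((k:ℝ)-1)*(b-δ)*b^s + ((k:ℝ)-1)*(b+δ)^(s+1) := by ring
        _ = ((s:ℝ)+1)*((k:ℝ)-1)*a*b^s + ((k:ℝ)-1)*c2^(s+1) := by rw [hab, hc2b]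
    rw [hg3 m, hg3 (m+1), hg3 (m+2), ← hQdef, ← hadef, ← hbdef, ← hc2def]
    have hQne : Q ≠ 0 := hQ0.ne'
    rw [div_pow, div_pow, div_pow, ← pow_mul, ← pow_mul, ← pow_mul]
    rw [← mul_le_mul_iff_of_pos_right (pow_pos hQ0 ((m+2)*(s+1)))]
    have eQ : Q * Q^((m+2)*(s+1)) = Q^((m+1)*(s+1)) * Q^(s+2) := by ring
    have eL : ((s:ℝ)+2)/((s:ℝ)+1)*Q*(b^(s+1)/Q^((m+1)*(s+1))) * Q^((m+2)*(s+1))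
        = ((s:ℝ)+2)*((k:ℝ)-1)*b^(s+1) := by
      calc ((s:ℝ)+2)/((s:ℝ)+1)*Q*(b^(s+1)/Q^((m+1)*(s+1))) * Q^((m+2)*(s+1))
          = ((s:ℝ)+2)/((s:ℝ)+1)*b^(s+1)*((Q * Q^((m+2)*(s+1)))/Q^((m+1)*(s+1))) := by
            ring
        _ = ((s:ℝ)+2)/((s:ℝ)+1)*b^(s+1)*((Q^((m+1)*(s+1)) * Q^(s+2))/Q^((m+1)*(s+1))) := by
            rw [eQ]
        _ = ((s:ℝ)+2)/((s:ℝ)+1)*b^(s+1)*Q^(s+2) := by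
            rw [mul_comm (Q^((m+1)*(s+1))) (Q^(s+2)), mul_div_assoc,
              div_self (pow_ne_zero _ hQne), mul_one]
        _ = ((s:ℝ)+2)/((s:ℝ)+1)*b^(s+1)*(((s:ℝ)+1)*((k:ℝ)-1)) := by rw [hQs2]
        _ = ((s:ℝ)+2)*((k:ℝ)-1)*b^(s+1) := by field_simp
    have eR : (a/Q^m * (b^s/Q^((m+1)*s)) + ((k:ℝ)-1)*(c2^(s+1)/Q^((m+2)*(s+1))))
          * Q^((m+2)*(s+1))
        = ((s:ℝ)+1)*((k:ℝ)-1)*a*b^s + ((k:ℝ)-1)*c2^(s+1) := by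
      have e1 : Q^((m+2)*(s+1)) = (Q^m * Q^((m+1)*s)) * Q^(s+2) := by ring
      calc (a/Q^m * (b^s/Q^((m+1)*s)) + ((k:ℝ)-1)*(c2^(s+1)/Q^((m+2)*(s+1))))
            * Q^((m+2)*(s+1))
          = a*b^s*(Q^((m+2)*(s+1))/(Q^m * Q^((m+1)*s)))
              + ((k:ℝ)-1)*c2^(s+1)*(Q^((m+2)*(s+1))/Q^((m+2)*(s+1))) := by
            ring
        _ = a*b^s*(Q^((m+2)*(s+1))/(Q^m * Q^((m+1)*s))) + ((k:ℝ)-1)*c2^(s+1) := by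
            rw [div_self (pow_ne_zero _ hQne), mul_one]
        _ = a*b^s*Q^(s+2) + ((k:ℝ)-1)*c2^(s+1) := by
            rw [e1, mul_comm (Q^m * Q^((m+1)*s)) (Q^(s+2)), mul_div_assoc,
              div_self (mul_ne_zero (pow_ne_zero _ hQne) (pow_ne_zero _ hQne)), mul_one]
        _ = ((s:ℝ)+1)*((k:ℝ)-1)*a*b^s + ((k:ℝ)-1)*c2^(s+1) := by rw [hQs2]; ring
    rw [eL, eR]
    exact key

theorem stmt15 (t k : ℕ) (ht : 2 ≤ t) (hk : 2 ≤ k)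
    (V : Type*) [Fintype V] [DecidableEq V]
    (E : Finset (Finset V))
    (huniform : ∀ e ∈ E, e.card = t)
    (hregular : ∀ v : V, (E.filter (fun e => v ∈ e)).card = k)
    (G : SimpleGraph V)
    (hG : ∀ u v : V, G.Adj u v ↔ u ≠ v ∧ ∃ e ∈ E, u ∈ e ∧ v ∈ e)
    (hconn : G.Connected)
    (o : V)
    (g : ℕ → ℝ)
    (hg : ∀ n : ℕ, g n =
      (1 + (((t : ℝ) * (1 - 1 / (k : ℝ))) ^ ((1 : ℝ) / ((t : ℝ) - 1)) - 1) * (n : ℝ)) /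
        (((t : ℝ) - 1) * ((k : ℝ) - 1)) ^ ((n : ℝ) / (t : ℝ)))
    (x : V → ℝ) (hx : ∀ v : V, x v = g (G.dist o v)) :
    ∀ v : V,
      (∑ e ∈ E.filter (fun e => v ∈ e), ∏ u ∈ e.erase v, x u) ≥
        ((t : ℝ) / ((t : ℝ) - 1)) * (((t : ℝ) - 1) * ((k : ℝ) - 1)) ^ ((1 : ℝ) / (t : ℝ)) *
          x v ^ (t - 1) := by
  obtain ⟨s, rfl⟩ : ∃ s, t = s + 2 := ⟨t - 2, by omega⟩
  have hcast2 : ((s+2:ℕ):ℝ) = (s:ℝ)+2 := by push_cast; ring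
  have e21 : (s:ℝ)+2-1 = (s:ℝ)+1 := by ring
  have hg2 : ∀ n : ℕ, g n =
      (1 + ((((s:ℝ)+2) * (1 - 1 / (k:ℝ))) ^ ((1:ℝ)/((s:ℝ)+1)) - 1) * (n:ℝ)) /
        (((s:ℝ)+1) * ((k:ℝ)-1)) ^ ((n:ℝ)/((s:ℝ)+2)) := by
    intro n; rw [hg n, hcast2, e21]
  obtain ⟨hgpos, hmono, hroot, hgen⟩ := analytic s k hk g hg2
  intro v
  rw [ge_iff_le, hcast2, e21, show s+2-1 = s+1 from rfl]
  have hEcard : (E.filter (fun e => v ∈ e)).card = k := hregular v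
  have hdist_le : ∀ e ∈ E, ∀ u ∈ e, ∀ w ∈ e, G.dist o u ≤ G.dist o w + 1 := by
    intro e he u hu w hw
    by_cases huw : u = w
    · subst huw; omega
    · have hadj : G.Adj w u := (hG w u).mpr ⟨fun h => huw h.symm, ⟨e, he, hw, hu⟩⟩
      have h1 : G.dist w u = 1 := SimpleGraph.dist_eq_one_iff_adj.mpr hadj
      have h2 := hconn.dist_triangle (u := o) (v := w) (w := u)
      omega
  have hprod_le : ∀ e ∈ E.filter (fun e => v ∈ e),
      g (G.dist o v + 1) ^ (s+1) ≤ ∏ u ∈ e.erase v, x u := by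
    intro e he
    rw [Finset.mem_filter] at he
    obtain ⟨heE, hve⟩ := he
    have hcard : (e.erase v).card = s + 1 := by
      rw [Finset.card_erase_of_mem hve, huniform e heE]; omega
    calc g (G.dist o v + 1) ^ (s+1) = ∏ _u ∈ e.erase v, g (G.dist o v + 1) := by
          rw [Finset.prod_const, hcard]
      _ ≤ ∏ u ∈ e.erase v, x u := by
          apply Finset.prod_le_prod
          · intro i _; exact (hgpos _).le
          · intro u hu
            rw [hx u]
            exact hmono _ _ (hdist_le e heE u (Finset.mem_of_mem_erase hu) v hve)
  rcases Nat.eq_zero_or_pos (G.dist o v) with hd0 | hdpos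
  · -- v = o case
    rw [hx v, hd0]
    have hsum := Finset.card_nsmul_le_sum (E.filter (fun e => v ∈ e))
      (fun e => ∏ u ∈ e.erase v, x u) (g (G.dist o v + 1) ^ (s+1)) hprod_le
    rw [hEcard, nsmul_eq_mul, hd0, show (0:ℕ)+1 = 1 from rfl] at hsum
    linarith [hroot, hsum]
  · obtain ⟨m, hm⟩ : ∃ m, G.dist o v = m + 1 := ⟨G.dist o v - 1, by omega⟩
    have hvo : v ≠ o := by
      intro h
      rw [h, SimpleGraph.dist_self] at hm
      omega
    have hne0 : G.dist o v ≠ 0 := by omega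
    obtain ⟨p, hp⟩ := SimpleGraph.exists_walk_of_dist_ne_zero hne0
    obtain ⟨w, hadj, q', hq'⟩ := SimpleGraph.Walk.exists_eq_cons_of_ne hvo p.reverse
    have hlen : q'.length = m := by
      have h1 : p.reverse.length = p.length := SimpleGraph.Walk.length_reverse p
      rw [hq', SimpleGraph.Walk.length_cons] at h1
      omega
    have hdow : G.dist o w ≤ m := by
      rw [SimpleGraph.dist_comm]
      exact hlen ▸ SimpleGraph.dist_le q'
    obtain ⟨hvw, estar, heE, hvestar, hwestar⟩ := (hG v w).mp hadj
    have hestar : estar ∈ E.filter (fun e => v ∈ e) := Finset.mem_filter.mpr ⟨heE, hvestar⟩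
    have hw_in : w ∈ estar.erase v := Finset.mem_erase.mpr ⟨fun h => hvw h.symm, hwestar⟩
    have hcard2 : ((estar.erase v).erase w).card = s := by
      rw [Finset.card_erase_of_mem hw_in, Finset.card_erase_of_mem hvestar,
        huniform _ heE]
      omega
    have hprodstar : g m * g (m+1) ^ s ≤ ∏ u ∈ estar.erase v, x u := by
      rw [← Finset.mul_prod_erase _ _ hw_in]
      apply mul_le_mul
      · rw [hx w]; exact hmono _ _ hdow
      · calc g (m+1)^s = ∏ _u ∈ (estar.erase v).erase w, g (m+1) := by
              rw [Finset.prod_const, hcard2]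
          _ ≤ ∏ u ∈ (estar.erase v).erase w, x u := by
              apply Finset.prod_le_prod
              · intro i _; exact (hgpos _).le
              · intro u hu
                rw [hx u]
                apply hmono
                have := hdist_le estar heE u
                  (Finset.mem_of_mem_erase (Finset.mem_of_mem_erase hu)) w hwestar
                omega
      · exact pow_nonneg (hgpos _).le s
      · rw [hx w]; exact (hgpos _).le
    have hsplit := Finset.add_sum_erase (E.filter (fun e => v ∈ e))
      (fun e => ∏ u ∈ e.erase v, x u) hestar
    have hcard3 : ((E.filter (fun e => v ∈ e)).erase estar).card = k - 1 := by
      rw [Finset.card_erase_of_mem hestar, hEcard]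
    have hrest : ((k:ℝ) - 1) * g (m+2) ^ (s+1)
        ≤ ∑ e ∈ (E.filter (fun e => v ∈ e)).erase estar, ∏ u ∈ e.erase v, x u := by
      have h1 : ∀ e ∈ (E.filter (fun e => v ∈ e)).erase estar,
          g (m+2) ^ (s+1) ≤ ∏ u ∈ e.erase v, x u := by
        intro e he'
        have h2 := hprod_le e (Finset.mem_of_mem_erase he')
        rw [hm, show m+1+1 = m+2 from rfl] at h2
        exact h2
      have h3 := Finset.card_nsmul_le_sum _ _ _ h1
      rw [hcard3, nsmul_eq_mul] at h3
      have h4 : ((k-1:ℕ):ℝ) = (k:ℝ)-1 := by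
        rw [Nat.cast_sub (by omega : 1 ≤ k)]; norm_num
      rw [h4] at h3
      exact h3
    have hfinal := hgen m
    rw [hx v, hm]
    linarith [hfinal, hprodstar, hrest, hsplit]
end

section
/- Every finite k-regular t-uniform hypergraph H satisfies ρ(H) ≥ (t/(t-1))·((t-1)(k-1))^(1/t), where ρ(H) is the spectral radius of the adjacency tensor. -/
open Finset Real

theorem stmt17 (t k : ℕ) (ht : 2 ≤ t) (hk : 2 ≤ k)
    (V : Type*) [Fintype V] [DecidableEq V] [Nonempty V]
    (E : Finset (Finset V))
    (huniform : ∀ e ∈ E, e.card = t)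
    (hregular : ∀ v : V, (E.filter (fun e => v ∈ e)).card = k) :
    sSup {r : ℝ | ∃ x : V → ℝ, (∀ v, 0 ≤ x v) ∧ (∑ v, x v ^ t) = 1 ∧
        r = ∑ e ∈ E, (t : ℝ) * ∏ v ∈ e, x v} ≥
      ((t : ℝ) / ((t : ℝ) - 1)) * (((t : ℝ) - 1) * ((k : ℝ) - 1)) ^ ((1 : ℝ) / (t : ℝ)) := by
  have htR : (2:ℝ) ≤ (t:ℝ) := by exact_mod_cast ht
  have hkR : (2:ℝ) ≤ (k:ℝ) := by exact_mod_cast hk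
  have ht0 : (0:ℝ) < t := by linarith
  have htne : (t:ℝ) ≠ 0 := ne_of_gt ht0
  have ht1 : (0:ℝ) < (t:ℝ) - 1 := by linarith
  set n := Fintype.card V with hn
  have hn0 : 0 < n := Fintype.card_pos
  have hnR : (0:ℝ) < (n:ℝ) := by exact_mod_cast hn0
  set S := {r : ℝ | ∃ x : V → ℝ, (∀ v, 0 ≤ x v) ∧ (∑ v, x v ^ t) = 1 ∧
        r = ∑ e ∈ E, (t : ℝ) * ∏ v ∈ e, x v} with hS
  -- counting: t * |E| = n * k
  have hcount : t * E.card = n * k := by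
    have h1 : ∑ e ∈ E, e.card = t * E.card := by
      rw [Finset.sum_congr rfl huniform, Finset.sum_const, smul_eq_mul, mul_comm]
    have h2 : ∀ e : Finset V, e.card = ∑ v : V, if v ∈ e then 1 else 0 := by
      intro e
      rw [← Finset.card_filter]
      congr 1
      ext v
      simp
    calc t * E.card = ∑ e ∈ E, e.card := h1.symm
      _ = ∑ e ∈ E, ∑ v : V, if v ∈ e then 1 else 0 := Finset.sum_congr rfl fun e _ => h2 e
      _ = ∑ v : V, ∑ e ∈ E, if v ∈ e then 1 else 0 := Finset.sum_comm
      _ = ∑ v : V, (E.filter (fun e => v ∈ e)).card := by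
          refine Finset.sum_congr rfl fun v _ => ?_
          rw [Finset.card_filter]
      _ = n * k := by simp [hregular, hn]
  -- k ∈ S
  have hkS : (k:ℝ) ∈ S := by
    set c : ℝ := ((n:ℝ)⁻¹) ^ ((1:ℝ)/t) with hc
    have hc0 : 0 ≤ c := Real.rpow_nonneg (by positivity) _
    have hct : c ^ t = (n:ℝ)⁻¹ := by
      rw [hc, ← Real.rpow_natCast (((n:ℝ)⁻¹) ^ ((1:ℝ)/t)) t, ← Real.rpow_mul (by positivity),
        one_div_mul_cancel htne, Real.rpow_one]
    refine ⟨fun _ => c, fun _ => hc0, ?_, ?_⟩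
    · rw [Finset.sum_const, nsmul_eq_mul, hct, Finset.card_univ, ← hn]
      field_simp
    · have hval : ∀ e ∈ E, (t:ℝ) * ∏ _v ∈ e, c = (t:ℝ) * (n:ℝ)⁻¹ := by
        intro e he
        rw [Finset.prod_const, huniform e he, hct]
      rw [Finset.sum_congr rfl hval, Finset.sum_const, nsmul_eq_mul]
      have : (t:ℝ) * E.card = n * k := by exact_mod_cast hcount
      field_simp
      nlinarith [this]
  -- bounded above
  have hbdd : BddAbove S := by
    refine ⟨(E.card : ℝ) * t, ?_⟩
    rintro r ⟨x, hx0, hxsum, rfl⟩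
    have hx1 : ∀ v, x v ≤ 1 := by
      intro v
      have h1 : x v ^ t ≤ 1 := by
        rw [← hxsum]
        exact Finset.single_le_sum (fun w _ => pow_nonneg (hx0 w) t) (Finset.mem_univ v)
      exact pow_le_one_iff_of_nonneg (hx0 v) (by omega) |>.mp h1
    calc ∑ e ∈ E, (t : ℝ) * ∏ v ∈ e, x v ≤ ∑ e ∈ E, (t:ℝ) * 1 := by
          refine Finset.sum_le_sum fun e _ => ?_
          exact mul_le_mul_of_nonneg_left
            (Finset.prod_le_one (fun v _ => hx0 v) (fun v _ => hx1 v)) (by positivity)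
      _ = (E.card : ℝ) * t := by rw [Finset.sum_const, nsmul_eq_mul, mul_one]
  -- key inequality: RHS ≤ k
  have hkey : ((t : ℝ) / ((t : ℝ) - 1)) * (((t : ℝ) - 1) * ((k : ℝ) - 1)) ^ ((1 : ℝ) / (t : ℝ))
      ≤ (k:ℝ) := by
    have hamgm := Real.geom_mean_le_arith_mean3_weighted
      (w₁ := 1/t) (w₂ := 1/t) (w₃ := 1 - 2/t)
      (p₁ := (t:ℝ) - 1) (p₂ := (k:ℝ) - 1) (p₃ := 1)
      (by positivity) (by positivity)
      (by rw [sub_nonneg]; rw [div_le_one ht0]; linarith)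
      (by linarith) (by linarith) (by norm_num)
      (by field_simp; ring)
    rw [Real.one_rpow, mul_one, ← Real.mul_rpow (by linarith) (by linarith)] at hamgm
    have h2 : (((t : ℝ) - 1) * ((k : ℝ) - 1)) ^ ((1 : ℝ) / (t : ℝ)) ≤ (k:ℝ) * ((t:ℝ)-1) / t := by
      refine hamgm.trans ?_
      rw [le_div_iff₀ ht0]
      have h4 : ((k:ℝ)-2)*((t:ℝ)-2) ≥ 0 := by nlinarith
      field_simp
      nlinarith
    calc ((t : ℝ) / ((t : ℝ) - 1)) * (((t : ℝ) - 1) * ((k : ℝ) - 1)) ^ ((1 : ℝ) / (t : ℝ))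
        ≤ ((t : ℝ) / ((t : ℝ) - 1)) * ((k:ℝ) * ((t:ℝ)-1) / t) := by
          exact mul_le_mul_of_nonneg_left h2 (by positivity)
      _ = (k:ℝ) := by field_simp
  exact le_trans hkey (le_csSup hbdd hkS)
end
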